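/- arXiv:1506.02190 — 2 statements merged into one kernel-verified Lean document; each statement's English description precedes it below -/
import Mathlib

section
/- Let k ≥ 2, let y : Fin k → ℝ be binary relevance values of a ranked list (position 1 is the top), let K̃ > 0 be a real constant, and define AP@k(y) = (∑_{p=1}^{k} y(p)·((1/p)∑_{q=1}^{p} y(q)))/K̃. Let 1 ≤ p < k and let y' be obtained from y by swapping the entries at positions p and p+1. Then AP@k(y') − AP@k(y) = (y(p+1) − y(p))·(1 + ∑_{q=1}^{p-1} y(q))·(1/p − 1/(p+1))/K̃. (Equation (map-change): the change in average precision when the item at position p+1 is moved up one position.) -/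
open Finset

/-- Equation (map-change): the change in average precision when the item at position
`p+1` (1-based) is moved up one position, swapping with the item at position `p`.
Here positions are 0-indexed by `Fin k`, so index `p` corresponds to 1-based
position `p + 1`. -/
theorem ap_swap_change (k : ℕ) (hk : 2 ≤ k) (y : Fin k → ℝ)
    (hy : ∀ p, y p = 0 ∨ y p = 1) (Kt : ℝ) (hKt : 0 < Kt)
    (p : Fin k) (hp : (p : ℕ) + 1 < k) :
    let AP : (Fin k → ℝ) → ℝ := fun z =>
      (∑ q : Fin k, z q * ((1 / ((q : ℕ) + 1 : ℝ)) *
        ∑ r ∈ Finset.univ.filter (fun r => r ≤ q), z r)) / Kt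
    let p' : Fin k := ⟨(p : ℕ) + 1, hp⟩
    let y' : Fin k → ℝ := y ∘ Equiv.swap p p'
    AP y' - AP y =
      (y p' - y p) * (1 + ∑ q ∈ Finset.univ.filter (fun q => q < p), y q) *
        (1 / ((p : ℕ) + 1 : ℝ) - 1 / ((p : ℕ) + 2 : ℝ)) / Kt := by
  intro AP p' y'
  classical
  have hvp' : (p' : ℕ) = (p : ℕ) + 1 := rfl
  have hne : p ≠ p' := by
    intro h
    have := congrArg Fin.val h
    simp [hvp'] at this
  have hswp : Equiv.swap p p' p = p' := Equiv.swap_apply_left _ _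
  have hswp' : Equiv.swap p p' p' = p := Equiv.swap_apply_right _ _
  have hswo : ∀ r : Fin k, r ≠ p → r ≠ p' → Equiv.swap p p' r = r :=
    fun r h1 h2 => Equiv.swap_apply_of_ne_of_ne h1 h2
  set A := ∑ q ∈ Finset.univ.filter (fun q => q < p), y q with hA
  set F : (Fin k → ℝ) → Fin k → ℝ := fun z q =>
    z q * ((1 / ((q : ℕ) + 1 : ℝ)) * ∑ r ∈ Finset.univ.filter (fun r => r ≤ q), z r)
    with hF
  -- terms away from p, p' are unchanged
  have ha : ∀ q : Fin k, q ≠ p → q ≠ p' → F y' q = F y q := by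
    intro q h1 h2
    have h1' : (q : ℕ) ≠ (p : ℕ) := fun h => h1 (Fin.ext h)
    have h2' : (q : ℕ) ≠ (p : ℕ) + 1 := fun h => h2 (Fin.ext h)
    have hq : y' q = y q := by simp [y', hswo q h1 h2]
    have hsum : ∑ r ∈ Finset.univ.filter (fun r => r ≤ q), y' r
        = ∑ r ∈ Finset.univ.filter (fun r => r ≤ q), y r := by
      apply Finset.sum_equiv (Equiv.swap p p')
      · intro r
        simp only [Finset.mem_filter, Finset.mem_univ, true_and]
        by_cases hr1 : r = p
        · subst hr1
          rw [hswp]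
          simp only [Fin.le_def, hvp']
          omega
        · by_cases hr2 : r = p'
          · subst hr2
            rw [hswp']
            simp only [Fin.le_def, hvp']
            omega
          · rw [hswo r hr1 hr2]
      · intro r _
        simp [y']
    simp only [hF, hq, hsum]
  -- the set {r ≤ p}
  have hSp : Finset.univ.filter (fun r => r ≤ p)
      = insert p (Finset.univ.filter (fun r => r < p)) := by
    ext r
    simp only [Finset.mem_filter, Finset.mem_univ, true_and, Finset.mem_insert]
    constructor
    · intro h
      rcases eq_or_lt_of_le h with h | h
      · exact Or.inl h
      · exact Or.inr h
    · rintro (h | h)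
      · exact le_of_eq h
      · exact le_of_lt h
  have hpnot : p ∉ Finset.univ.filter (fun r => r < p) := by simp
  have hSp' : Finset.univ.filter (fun r => r ≤ p')
      = insert p' (Finset.univ.filter (fun r => r ≤ p)) := by
    ext r
    simp only [Finset.mem_filter, Finset.mem_univ, true_and, Finset.mem_insert,
      Fin.le_def, hvp', Fin.ext_iff]
    omega
  have hp'not : p' ∉ Finset.univ.filter (fun r => r ≤ p) := by
    simp only [Finset.mem_filter, Finset.mem_univ, true_and, Fin.le_def, hvp']
    omega
  -- primed values at p, p'
  have hy'p : y' p = y p' := by simp [y', hswp]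
  have hy'p' : y' p' = y p := by simp [y', hswp']
  -- sums over {r < p} unchanged
  have hAsum : ∑ q ∈ Finset.univ.filter (fun q => q < p), y' q = A := by
    rw [hA]
    apply Finset.sum_congr rfl
    intro r hr
    simp only [Finset.mem_filter, Finset.mem_univ, true_and] at hr
    have hr1 : r ≠ p := ne_of_lt hr
    have hr2 : r ≠ p' := by
      intro h
      have : (r : ℕ) < (p : ℕ) := hr
      rw [h, hvp'] at this
      omega
    simp [y', hswo r hr1 hr2]
  -- inner sums at p and p'
  have hSy : ∑ r ∈ Finset.univ.filter (fun r => r ≤ p), y r = y p + A := by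
    rw [hSp, Finset.sum_insert hpnot]
  have hSy' : ∑ r ∈ Finset.univ.filter (fun r => r ≤ p), y' r = y p' + A := by
    rw [hSp, Finset.sum_insert hpnot, hy'p, hAsum]
  have hTy : ∑ r ∈ Finset.univ.filter (fun r => r ≤ p'), y r = y p' + (y p + A) := by
    rw [hSp', Finset.sum_insert hp'not, hSy]
  have hTy' : ∑ r ∈ Finset.univ.filter (fun r => r ≤ p'), y' r = y p + (y p' + A) := by
    rw [hSp', Finset.sum_insert hp'not, hSy', hy'p']
  -- reduce to two terms
  have hdiff : AP y' - AP y = (∑ q : Fin k, (F y' q - F y q)) / Kt := by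
    simp only [AP, hF, ← sub_div, Finset.sum_sub_distrib]
  have hsub : ∑ q : Fin k, (F y' q - F y q)
      = ∑ q ∈ ({p, p'} : Finset (Fin k)), (F y' q - F y q) := by
    apply (Finset.sum_subset (Finset.subset_univ _) _).symm
    intro x _ hx
    simp only [Finset.mem_insert, Finset.mem_singleton, not_or] at hx
    rw [ha x hx.1 hx.2, sub_self]
  rw [hdiff, hsub, Finset.sum_pair hne]
  have hcast : ((p' : ℕ) : ℝ) + 1 = ((p : ℕ) : ℝ) + 2 := by
    rw [hvp']; push_cast; ring
  simp only [hF, hy'p, hy'p', hSy, hSy', hTy, hTy', hcast]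
  have hep : y p * y p = y p := by rcases hy p with h | h <;> simp [h]
  have hep' : y p' * y p' = y p' := by rcases hy p' with h | h <;> simp [h]
  field_simp
  ring_nf
  nlinarith [hep, hep', sq_nonneg (y p), sq_nonneg (y p')]
end

section
/- Let k ≥ 2, let y : Fin k → ℝ be binary relevance values of a ranked list, let K̃ > 0 be a real constant, and define AP@k(y) = (∑_{p=1}^{k} y(p)·((1/p)∑_{q=1}^{p} y(q)))/K̃. Let a ∈ {0,1} (as a real number) and let y' be obtained from y by replacing the entry at position k with a. Then AP@k(y') − AP@k(y) = (a − y(k))·(1 + ∑_{q=1}^{k-1} y(q))·(1/k)/K̃. (Equation (map-change) in the boundary case p = k, with 1/(p+1) replaced by 0: the change in average precision when a new item replaces the item at the bottom position of the top-k list.) -/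
open Finset

/-- Equation (map-change) in the boundary case `p = k` (with `1/(p+1)` replaced by 0):
the change in average precision when a new item of relevance `a` replaces the item at
the bottom position of the top-k list. Positions are 0-indexed by `Fin k`, so the
bottom (1-based position `k`) is index `k - 1`. -/
theorem ap_bottom_replace_change (k : ℕ) (hk : 2 ≤ k) (y : Fin k → ℝ)
    (hy : ∀ p, y p = 0 ∨ y p = 1) (Kt : ℝ) (hKt : 0 < Kt)
    (a : ℝ) (ha : a = 0 ∨ a = 1) :
    let AP : (Fin k → ℝ) → ℝ := fun z =>
      (∑ q : Fin k, z q * ((1 / ((q : ℕ) + 1 : ℝ)) *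
        ∑ r ∈ Finset.univ.filter (fun r => r ≤ q), z r)) / Kt
    let bot : Fin k := ⟨k - 1, by omega⟩
    let y' : Fin k → ℝ := Function.update y bot a
    AP y' - AP y =
      (a - y bot) * (1 + ∑ q ∈ Finset.univ.filter (fun q => q < bot), y q) *
        (1 / (k : ℝ)) / Kt := by
  intro AP bot y'
  classical
  have hlt : ∀ q : Fin k, q ≠ bot → q < bot := by
    intro q hq
    have h1 : (q : ℕ) < k := q.isLt
    have h2 : (q : ℕ) ≠ k - 1 := fun h => hq (Fin.ext h)
    exact Fin.lt_def.mpr (by simp only [bot]; omega)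
  have hfil : (Finset.univ.filter (fun q : Fin k => q < bot)) = Finset.univ.erase bot := by
    ext q
    simp only [mem_filter, mem_univ, true_and, mem_erase]
    constructor
    · exact fun h => ⟨ne_of_lt h, trivial⟩
    · exact fun h => hlt q h.1
  -- inner sums for q ≠ bot agree
  have hinner : ∀ q : Fin k, q ≠ bot →
      (∑ r ∈ Finset.univ.filter (fun r => r ≤ q), y' r)
        = ∑ r ∈ Finset.univ.filter (fun r => r ≤ q), y r := by
    intro q hq
    apply Finset.sum_congr rfl
    intro r hr
    simp only [mem_filter] at hr
    have hrb : r ≠ bot := by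
      intro h
      exact absurd (lt_of_le_of_lt hr.2 (hlt q hq)) (by simp [h])
    show Function.update y bot a r = y r
    exact Function.update_of_ne hrb a y
  have hfull : ∀ z : Fin k → ℝ,
      (Finset.univ.filter (fun r : Fin k => r ≤ bot)) = Finset.univ := by
    intro z
    ext r
    simp only [mem_filter, mem_univ, true_and, iff_true]
    rcases eq_or_ne r bot with h | h
    · exact le_of_eq h
    · exact le_of_lt (hlt r h)
  have hbk : ((bot : ℕ) : ℝ) + 1 = (k : ℝ) := by
    have h : ((bot : ℕ) + 1 : ℕ) = k := by
      show (k - 1) + 1 = k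
      omega
    calc ((bot : ℕ) : ℝ) + 1 = (((bot : ℕ) + 1 : ℕ) : ℝ) := by push_cast; ring
      _ = (k : ℝ) := by rw [h]
  set S : ℝ := ∑ q ∈ Finset.univ.filter (fun q => q < bot), y q with hS
  have hsum : ∀ z : Fin k → ℝ, z bot * z bot = z bot →
      (∀ r, r ≠ bot → z r = y r) →
      (∑ q : Fin k, z q * ((1 / ((q : ℕ) + 1 : ℝ)) *
        ∑ r ∈ Finset.univ.filter (fun r => r ≤ q), z r))
      = (∑ q ∈ Finset.univ.erase bot, y q * ((1 / ((q : ℕ) + 1 : ℝ)) *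
        ∑ r ∈ Finset.univ.filter (fun r => r ≤ q), y r))
        + (1 / (k : ℝ)) * (z bot + z bot * S) := by
    intro z hz2 hzy
    rw [← Finset.add_sum_erase Finset.univ _ (Finset.mem_univ bot)]
    rw [add_comm]
    congr 1
    · apply Finset.sum_congr rfl
      intro q hq
      have hq' : q ≠ bot := (Finset.mem_erase.mp hq).1
      rw [hzy q hq']
      congr 2
      apply Finset.sum_congr rfl
      intro r hr
      simp only [mem_filter] at hr
      have hrb : r ≠ bot := by
        intro h
        exact absurd (lt_of_le_of_lt hr.2 (hlt q hq')) (by simp [h])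
      exact hzy r hrb
    · rw [hfull z, hbk]
      have : (∑ r : Fin k, z r) = z bot + S := by
        rw [← Finset.add_sum_erase Finset.univ _ (Finset.mem_univ bot), hS, hfil]
        congr 1
        exact Finset.sum_congr rfl (fun r hr => hzy r (Finset.mem_erase.mp hr).1)
      rw [this]
      ring_nf
      rw [show z bot ^ 2 = z bot by rw [sq]; exact hz2]
      ring
  have hy'bot : y' bot = a := Function.update_self bot a y
  have h1 : y' bot * y' bot = y' bot := by
    rw [hy'bot]; rcases ha with h | h <;> simp [h]
  have h2 : y bot * y bot = y bot := by
    rcases hy bot with h | h <;> simp [h]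
  have e1 := hsum y' h1 (fun r hr => Function.update_of_ne hr a y)
  have e2 := hsum y h2 (fun r _ => rfl)
  simp only [AP]
  rw [div_sub_div_same, e1, e2, hy'bot]
  field_simp
  ring
end
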